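/- Let 0 < λ₂ ≤ λ_N be real numbers and let ε₀, ε₁, θ₀ be any real numbers. Define p(z, λ) = z² + (ε₀λ − 1 − θ₀)z + (ε₁λ + θ₀). Then the maximum of the moduli of the complex roots of p(z, λ₂) and of p(z, λ_N) is at least (√λ_N − √λ₂)/(√λ_N + √λ₂). -/

import Mathlib

lemma quad_roots (B C : ℂ) : ∃ α β : ℂ, α + β = -B ∧ α * β = C := by
  obtain ⟨s, hs⟩ := IsAlgClosed.exists_pow_nat_eq (B ^ 2 - 4 * C) (n := 2) (by norm_num)
  exact ⟨(-B + s) / 2, (-B - s) / 2, by ring, by linear_combination (-(1:ℂ)/4) * hs⟩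

/-- For any parameters ε₀, ε₁, θ₀, the maximum root modulus of
p(z, λ₂) and p(z, λ_N) is at least (√λ_N − √λ₂)/(√λ_N + √λ₂): some root of one of
the two quadratics has modulus at least that value. -/
theorem stmt_1 (lam2 lamN : ℝ) (h2 : 0 < lam2) (h2N : lam2 ≤ lamN)
    (ε₀ ε₁ θ₀ : ℝ) :
    ∃ z : ℂ,
      (z ^ 2 + ((ε₀ * lam2 - 1 - θ₀ : ℝ) : ℂ) * z + ((ε₁ * lam2 + θ₀ : ℝ) : ℂ) = 0 ∨
       z ^ 2 + ((ε₀ * lamN - 1 - θ₀ : ℝ) : ℂ) * z + ((ε₁ * lamN + θ₀ : ℝ) : ℂ) = 0) ∧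
      (Real.sqrt lamN - Real.sqrt lam2) / (Real.sqrt lamN + Real.sqrt lam2) ≤ ‖z‖ := by
  obtain ⟨a2, b2, hs2, hm2⟩ := quad_roots ((ε₀ * lam2 - 1 - θ₀ : ℝ) : ℂ) ((ε₁ * lam2 + θ₀ : ℝ) : ℂ)
  obtain ⟨aN, bN, hsN, hmN⟩ := quad_roots ((ε₀ * lamN - 1 - θ₀ : ℝ) : ℂ) ((ε₁ * lamN + θ₀ : ℝ) : ℂ)
  have ra2 : a2 ^ 2 + ((ε₀ * lam2 - 1 - θ₀ : ℝ) : ℂ) * a2 + ((ε₁ * lam2 + θ₀ : ℝ) : ℂ) = 0 := by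
    linear_combination a2 * hs2 - hm2
  have rb2 : b2 ^ 2 + ((ε₀ * lam2 - 1 - θ₀ : ℝ) : ℂ) * b2 + ((ε₁ * lam2 + θ₀ : ℝ) : ℂ) = 0 := by
    linear_combination b2 * hs2 - hm2
  have raN : aN ^ 2 + ((ε₀ * lamN - 1 - θ₀ : ℝ) : ℂ) * aN + ((ε₁ * lamN + θ₀ : ℝ) : ℂ) = 0 := by
    linear_combination aN * hsN - hmN
  have rbN : bN ^ 2 + ((ε₀ * lamN - 1 - θ₀ : ℝ) : ℂ) * bN + ((ε₁ * lamN + θ₀ : ℝ) : ℂ) = 0 := by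
    linear_combination bN * hsN - hmN
  set r := (Real.sqrt lamN - Real.sqrt lam2) / (Real.sqrt lamN + Real.sqrt lam2) with hr
  set R := max (max (‖a2‖) (‖b2‖)) (max (‖aN‖) (‖bN‖))
    with hR
  -- evaluation at 1
  have e2 : ‖1 - a2‖ * ‖1 - b2‖ = |ε₀ + ε₁| * lam2 := by
    rw [← norm_mul]
    have h : (1 - a2) * (1 - b2) = (((ε₀ + ε₁) * lam2 : ℝ) : ℂ) := by
      push_cast at hs2 hm2 ⊢
      linear_combination -hs2 + hm2
    rw [h, Complex.norm_real, Real.norm_eq_abs, abs_mul, abs_of_pos h2]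
  have eN : ‖1 - aN‖ * ‖1 - bN‖ = |ε₀ + ε₁| * lamN := by
    rw [← norm_mul]
    have h : (1 - aN) * (1 - bN) = (((ε₀ + ε₁) * lamN : ℝ) : ℂ) := by
      push_cast at hsN hmN ⊢
      linear_combination -hsN + hmN
    rw [h, Complex.norm_real, Real.norm_eq_abs, abs_mul, abs_of_pos (lt_of_lt_of_le h2 h2N)]
  have s2pos : 0 < Real.sqrt lam2 := Real.sqrt_pos.mpr h2
  have sNpos : 0 < Real.sqrt lamN := Real.sqrt_pos.mpr (lt_of_lt_of_le h2 h2N)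
  have s2N : Real.sqrt lam2 ≤ Real.sqrt lamN := Real.sqrt_le_sqrt h2N
  have sq2 : Real.sqrt lam2 ^ 2 = lam2 := Real.sq_sqrt h2.le
  have sqN : Real.sqrt lamN ^ 2 = lamN := Real.sq_sqrt (lt_of_lt_of_le h2 h2N).le
  have hr1 : r < 1 := by
    rw [hr, div_lt_one (by linarith)]; linarith
  have hR0 : 0 ≤ R := le_trans (norm_nonneg a2) (le_trans (le_max_left _ _)
    (le_max_left _ _))
  have low : ∀ z : ℂ, 1 - ‖z‖ ≤ ‖1 - z‖ := fun z => by
    have := norm_sub_norm_le (1 : ℂ) z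
    simpa using this
  have high : ∀ z : ℂ, ‖1 - z‖ ≤ 1 + ‖z‖ := fun z => by
    have := norm_sub_le (1 : ℂ) z
    simpa using this
  have key : r ≤ R := by
    by_contra hlt
    push_neg at hlt
    have hR1 : R < 1 := hlt.trans hr1
    have ha2R : ‖a2‖ ≤ R := le_trans (le_max_left _ _) (le_max_left _ _)
    have hb2R : ‖b2‖ ≤ R := le_trans (le_max_right _ _) (le_max_left _ _)
    have haNR : ‖aN‖ ≤ R := le_trans (le_max_left _ _) (le_max_right _ _)
    have hbNR : ‖bN‖ ≤ R := le_trans (le_max_right _ _) (le_max_right _ _)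
    have hA2 : (1 - R) * (1 - R) ≤ |ε₀ + ε₁| * lam2 := by
      rw [← e2]
      exact mul_le_mul (le_trans (by linarith) (low a2)) (le_trans (by linarith) (low b2))
        (by linarith) (norm_nonneg _)
    have hAN : |ε₀ + ε₁| * lamN ≤ (1 + R) * (1 + R) := by
      rw [← eN]
      exact mul_le_mul (le_trans (high aN) (by linarith)) (le_trans (high bN) (by linarith))
        (norm_nonneg _) (by linarith)
    have chain : (1 - R) * (1 - R) * lamN ≤ (1 + R) * (1 + R) * lam2 := by
      have t1 : (1 - R) * (1 - R) * lamN ≤ (|ε₀ + ε₁| * lam2) * lamN :=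
        mul_le_mul_of_nonneg_right hA2 (lt_of_lt_of_le h2 h2N).le
      have t2 : (|ε₀ + ε₁| * lamN) * lam2 ≤ (1 + R) * (1 + R) * lam2 :=
        mul_le_mul_of_nonneg_right hAN h2.le
      nlinarith
    have sqle : ((1 - R) * Real.sqrt lamN) ^ 2 ≤ ((1 + R) * Real.sqrt lam2) ^ 2 := by
      nlinarith
    have lin : (1 - R) * Real.sqrt lamN ≤ (1 + R) * Real.sqrt lam2 :=
      le_of_pow_le_pow_left₀ (by norm_num) (by positivity) sqle
    have : r ≤ R := by
      rw [hr, div_le_iff₀ (by linarith)]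
      nlinarith
    linarith
  rcases le_max_iff.mp key with h | h <;> rcases le_max_iff.mp h with h' | h'
  · exact ⟨a2, Or.inl ra2, h'⟩
  · exact ⟨b2, Or.inl rb2, h'⟩
  · exact ⟨aN, Or.inr raN, h'⟩
  · exact ⟨bN, Or.inr rbN, h'⟩
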